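/- Fix integers n ≥ 1 and d_max ≥ 1. There exists a sequence of functions (f_l)_{l ≥ 1}, where f_1 maps a pair (context in ℝ^{n×1}, finite multiset of contexts in ℝ^{n×1}) to ℝ^{n×2d_max} and, for l ≥ 2, f_l maps a pair (context in ℝ^{n×2d_max}, finite multiset of contexts in ℝ^{n×2d_max}) to ℝ^{n×2d_max}, with the following property: for every finite connected simple graph G on n vertices with maximum degree at most d_max, initializing U_i^{(0)} = 𝟙_i ∈ ℝ^{n×1} (the indicator column of v_i) and setting U_i^{(l)} = f_l(U_i^{(l-1)}, {U_j^{(l-1)} : v_j ∈ N_i}) for l ≥ 1, the rows of every local context encode the receptive field by orthogonality: for every l ≥ 1, every vertex v_i and all vertices v_j, v_k, the rows U_i^{(l)}[j,:] and U_i^{(l)}[k,:] are orthogonal in ℝ^{2d_max} if and only if (v_j, v_k) ∈ E_i^{(l)}. -/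

import Mathlib

open scoped Classical

/-- The receptive-field graph `(V, E_i^{(l)})` of node `i` after `l` message-passing
layers: `E_i^{(l)} = {(p,q) ∈ E : d(i,p) ≤ l, d(i,q) ≤ l, d(i,p) + d(i,q) < 2l}`. -/
def recepGraph {V : Type*} (G : SimpleGraph V) (i : V) (l : ℕ) : SimpleGraph V where
  Adj p q := G.Adj p q ∧ G.dist i p ≤ l ∧ G.dist i q ≤ l ∧
    G.dist i p + G.dist i q < 2 * l
  symm := ⟨fun p q h => ⟨h.1.symm, h.2.2.1, h.2.1, by have := h.2.2.2; omega⟩⟩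
  loopless := ⟨fun p h => G.irrefl h.1⟩

/-- Width of the local contexts: `1` at initialization, `2·d_max` afterwards. -/
def width (dmax : ℕ) : ℕ → ℕ
  | 0 => 1
  | _ + 1 => 2 * dmax


lemma avoid_subspaces {E : Type*} [NormedAddCommGroup E] [NormedSpace ℝ E]
    [FiniteDimensional ℝ E] {ι : Type*} [Finite ι] (p : ι → Submodule ℝ E)
    (hp : ∀ i, p i ≠ ⊤) : ∃ x : E, ∀ i, x ∉ p i := by
  by_contra h
  push_neg at h
  have hc : Countable ι := Finite.to_countable
  have hU : ⋃ i, (p i : Set E) = Set.univ := by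
    ext x; simp only [Set.mem_iUnion, Set.mem_univ, iff_true]
    exact h x
  obtain ⟨i, hi⟩ := nonempty_interior_of_iUnion_of_closed
    (fun i => (p i).closed_of_finiteDimensional) hU
  exact hp i ((p i).eq_top_of_nonempty_interior' hi)

def ValidRep (n dmax : ℕ) (H : SimpleGraph (Fin n))
    (M : Matrix (Fin n) (Fin (2 * dmax)) ℝ) : Prop :=
  ∀ j k, (∑ t, M j t * M k t = 0) ↔ H.Adj j k

lemma exists_validRep (n dmax : ℕ) (hd : 1 ≤ dmax) (H : SimpleGraph (Fin n))
    (hH : ∀ (v : Fin n) (s : Finset (Fin n)), (∀ w ∈ s, H.Adj v w) → s.card ≤ dmax) :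
    ∃ M, ValidRep n dmax H M := by
  set V := EuclideanSpace ℝ (Fin (2 * dmax)) with hV
  have key : ∀ m : ℕ, ∃ u : Fin n → V,
      (∀ j k : Fin n, (j : ℕ) < m → (k : ℕ) < m →
        ((inner ℝ (u j) (u k) : ℝ) = 0 ↔ H.Adj j k)) ∧
      (Set.InjOn u {x : Fin n | (x : ℕ) < m}) ∧
      (∀ t : Finset V, ↑t ⊆ u '' {x : Fin n | (x : ℕ) < m} → t.card ≤ dmax + 1 →
        LinearIndependent ℝ (fun b : (t : Set V) => (b : V))) := by
    intro m
    induction m with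
    | zero =>
      refine ⟨fun _ => 0, fun j k hj _ => absurd hj (by omega), ?_, ?_⟩
      · intro a ha; simp at ha
      · intro t hts _
        have : (t : Set V) = (∅ : Set V) := by
          apply Set.eq_empty_of_subset_empty
          refine hts.trans ?_
          have : {x : Fin n | (x : ℕ) < 0} = ∅ := by ext x; simp
          rw [this, Set.image_empty]
        rw [this]
        exact linearIndependent_empty ℝ V
    | succ m ih =>
      obtain ⟨u, h1, h2, h3⟩ := ih
      by_cases hm : n ≤ m
      · have hset : {x : Fin n | (x : ℕ) < m + 1} = {x : Fin n | (x : ℕ) < m} := by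
          ext x; simp only [Set.mem_setOf_eq]
          have := x.isLt; omega
        refine ⟨u, fun j k hj hk => h1 j k (by have := j.isLt; omega) (by have := k.isLt; omega),
          by rwa [hset], by rwa [hset]⟩
      · push_neg at hm
        haveI : DecidableEq V := Classical.decEq _
        set v : Fin n := ⟨m, hm⟩ with hv
        have hvval : (v : ℕ) = m := rfl
        set S : Finset (Fin n) := Finset.univ.filter (fun w => (w : ℕ) < m ∧ H.Adj v w) with hS
        have hSmem : ∀ w, w ∈ S ↔ ((w : ℕ) < m ∧ H.Adj v w) := by
          intro w; simp [hS]
        have hScard : S.card ≤ dmax := hH v S (fun w hw => ((hSmem w).1 hw).2)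
        set K : Submodule ℝ V := Submodule.span ℝ (u '' ↑S) with hK
        set W : Submodule ℝ V := Kᗮ with hW
        have himgS : u '' ↑S = ↑(S.image u) := (Finset.coe_image).symm
        have hKrank : Module.finrank ℝ K ≤ dmax := by
          rw [hK, himgS]
          exact le_trans (finrank_span_finset_le_card (S.image u))
            (le_trans (Finset.card_image_le) hScard)
        have hdim : Module.finrank ℝ W + Module.finrank ℝ K = 2 * dmax := by
          have := Submodule.finrank_add_finrank_orthogonal (K := K)
          rw [finrank_euclideanSpace_fin, ← hW] at this
          omega
        have hWrank : dmax ≤ Module.finrank ℝ W := by omega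
        have hWbot : W ≠ ⊥ := by
          intro hbot
          rw [hbot, finrank_bot] at hWrank; omega
        -- vectors of S lie in K
        have hmemK : ∀ s ∈ S, u s ∈ K := by
          intro s hs
          exact Submodule.subset_span ⟨s, hs, rfl⟩
        -- claim A : properness of non-neighbor constraints
        have claimA : ∀ w : Fin n, (w : ℕ) < m → ¬H.Adj v w →
            ¬(W ≤ (Submodule.span ℝ {u w})ᗮ) := by
          intro w hwm hwa hle
          have huwW : u w ∈ Wᗮ := by
            rw [Submodule.mem_orthogonal]
            intro y hy
            exact Submodule.mem_orthogonal_singleton_iff_inner_left.1 (hle hy)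
          rw [hW, Submodule.orthogonal_orthogonal] at huwW
          -- u w ∈ K = span (u '' S), contradicting independence
          have hwS : w ∉ S := fun h => hwa ((hSmem w).1 h).2
          have huwS : u w ∉ u '' ↑S := by
            rintro ⟨s, hs, heq⟩
            exact hwS (h2 (Set.mem_setOf_eq ▸ ((hSmem s).1 hs).1) hwm heq ▸ hs)
          have huwS' : u w ∉ S.image u := by
            intro hmem
            rw [← Finset.coe_image] at huwS
            exact huwS hmem
          set t : Finset V := Finset.cons (u w) (S.image u) huwS' with ht
          have htsub : ↑t ⊆ u '' {x : Fin n | (x : ℕ) < m} := by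
            rw [ht, Finset.coe_cons]
            intro y hy
            rcases Set.mem_insert_iff.1 hy with rfl | hy
            · exact ⟨w, hwm, rfl⟩
            · rw [Finset.coe_image] at hy
              obtain ⟨s, hs, rfl⟩ := hy
              exact ⟨s, ((hSmem s).1 hs).1, rfl⟩
          have htc : t.card ≤ dmax + 1 := by
            rw [ht, Finset.card_cons]
            have := le_trans (Finset.card_image_le (f := u) (s := S)) hScard; omega
          have hind := h3 t htsub htc
          rw [ht, Finset.coe_cons, Finset.coe_image] at hind
          have := ((linearIndepOn_id_insert huwS).1 hind).2
          exact this huwW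
        -- claim B : properness of span constraints
        have claimB : ∀ T : Finset (Fin n), (∀ x ∈ T, (x : ℕ) < m) → T.card ≤ dmax →
            ¬(W ≤ Submodule.span ℝ (u '' ↑T)) := by
          intro T hTm hTc hle
          set P : Submodule ℝ V := Submodule.span ℝ (u '' ↑T) with hP
          have hPrank : Module.finrank ℝ P ≤ T.card := by
            rw [hP, (Finset.coe_image (f := u) (s := T)).symm]
            exact le_trans (finrank_span_finset_le_card (T.image u)) Finset.card_image_le
          have hWP : W = P := Submodule.eq_of_le_of_finrank_le hle (by omega)
          have hPW : Module.finrank ℝ P = Module.finrank ℝ W := by rw [hWP]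
          -- S is nonempty
          obtain ⟨s, hs⟩ : S.Nonempty := by
            rcases S.eq_empty_or_nonempty with hE | hne
            · exfalso
              have hK0 : Module.finrank ℝ K = 0 := by
                have hKb : K = ⊥ := by rw [hK, hE]; simp
                rw [hKb]; exact finrank_bot ℝ V
              omega
            · exact hne
          -- every vertex of T is adjacent to s, and so is v
          have hadj : ∀ w ∈ insert v T, H.Adj s w := by
            intro w hw
            rcases Finset.mem_insert.1 hw with rfl | hw
            · exact ((hSmem s).1 hs).2.symm
            · have huwP : u w ∈ P := Submodule.subset_span ⟨w, hw, rfl⟩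
              have huwW : u w ∈ W := hWP ▸ huwP
              have h0 : (inner ℝ (u s) (u w) : ℝ) = 0 := by
                rw [hW, Submodule.mem_orthogonal] at huwW
                exact huwW (u s) (hmemK s hs)
              exact (h1 s w ((hSmem s).1 hs).1 (hTm w hw)).1 h0
          have hvT : v ∉ T := fun h => by have := hTm v h; omega
          have := hH s (insert v T)  hadj
          rw [Finset.card_insert_of_notMem hvT] at this
          omega
        -- choose the new vector by avoiding finitely many proper subspaces of W
        set C1 : Fin n → Submodule ℝ V := fun w =>
          if ((w : ℕ) < m ∧ ¬H.Adj v w) then (Submodule.span ℝ {u w})ᗮ else ⊥ with hC1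
        set C2 : Finset (Fin n) → Submodule ℝ V := fun T =>
          if ((∀ x ∈ T, (x : ℕ) < m) ∧ T.card ≤ dmax) then Submodule.span ℝ (u '' ↑T) else ⊥
          with hC2
        set Q : (Fin n ⊕ Finset (Fin n)) → Submodule ℝ ↥W :=
          fun i => Submodule.comap W.subtype (Sum.elim C1 C2 i) with hQdef
        have hQ : ∀ i, Q i ≠ ⊤ := by
          intro i htop
          rw [hQdef] at htop
          rw [Submodule.comap_subtype_eq_top] at htop
          rcases i with w | T
          · simp only [Sum.elim_inl, hC1] at htop
            split_ifs at htop with hc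
            · exact claimA w hc.1 hc.2 htop
            · exact hWbot (le_bot_iff.1 htop)
          · simp only [Sum.elim_inr, hC2] at htop
            split_ifs at htop with hc
            · exact claimB T hc.1 hc.2 htop
            · exact hWbot (le_bot_iff.1 htop)
        obtain ⟨ξ, hξ⟩ := avoid_subspaces Q hQ
        have hxA : ∀ w : Fin n, (w : ℕ) < m → ¬H.Adj v w →
            (inner ℝ (ξ : V) (u w) : ℝ) ≠ 0 := by
          intro w hw1 hw2 h0
          apply hξ (Sum.inl w)
          simp only [hQdef, Submodule.mem_comap, Sum.elim_inl, hC1]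
          rw [if_pos ⟨hw1, hw2⟩]
          exact Submodule.mem_orthogonal_singleton_iff_inner_left.2 h0
        have hxB : ∀ T : Finset (Fin n), (∀ y ∈ T, (y : ℕ) < m) → T.card ≤ dmax →
            (ξ : V) ∉ Submodule.span ℝ (u '' ↑T) := by
          intro T hT1 hT2 hmem
          apply hξ (Sum.inr T)
          simp only [hQdef, Submodule.mem_comap, Sum.elim_inr, hC2]
          rw [if_pos ⟨hT1, hT2⟩]
          exact hmem
        have hx0 : (ξ : V) ≠ 0 := by
          intro h0
          apply hxB ∅ (by simp) (by simp)
          rw [h0]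
          exact Submodule.zero_mem _
        have hxS : ∀ s ∈ S, (inner ℝ (u s) (ξ : V) : ℝ) = 0 := by
          intro s hs
          have hmem : (ξ : V) ∈ Kᗮ := ξ.2
          rw [Submodule.mem_orthogonal] at hmem
          exact hmem (u s) (hmemK s hs)
        set u' : Fin n → V := Function.update u v (ξ : V) with hu'
        have hu'lt : ∀ w : Fin n, (w : ℕ) < m → u' w = u w := by
          intro w hw
          apply Function.update_of_ne
          intro h
          rw [h, hvval] at hw
          omega
        have hu'v : u' v = (ξ : V) := Function.update_self _ _ _
        have hcase : ∀ j : Fin n, (j : ℕ) < m + 1 → ((j : ℕ) < m ∨ j = v) := by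
          intro j hj
          rcases Nat.lt_or_ge (j : ℕ) m with h | h
          · exact Or.inl h
          · exact Or.inr (Fin.ext (by omega))
        have hvgram : ∀ k : Fin n, (k : ℕ) < m →
            ((inner ℝ (ξ : V) (u k) : ℝ) = 0 ↔ H.Adj v k) := by
          intro k hkm
          constructor
          · intro h0
            by_contra hA
            exact hxA k hkm hA h0
          · intro hA
            rw [real_inner_comm]
            exact hxS k ((hSmem k).2 ⟨hkm, hA⟩)
        refine ⟨u', ?_, ?_, ?_⟩
        · -- gram property
          intro j k hj hk
          rcases hcase j hj with hjm | rfl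
          · rcases hcase k hk with hkm | rfl
            · rw [hu'lt j hjm, hu'lt k hkm]
              exact h1 j k hjm hkm
            · rw [hu'lt j hjm, hu'v, real_inner_comm, H.adj_comm]
              exact hvgram j hjm
          · rcases hcase k hk with hkm | rfl
            · rw [hu'v, hu'lt k hkm]
              exact hvgram k hkm
            · rw [hu'v]
              constructor
              · intro h0
                exact absurd (inner_self_eq_zero.1 h0) hx0
              · intro hA
                exact absurd hA (H.irrefl)
        · -- injectivity
          intro a ha b hb heq
          simp only [Set.mem_setOf_eq] at ha hb
          rcases hcase a ha with ham | rfl <;> rcases hcase b hb with hbm | rfl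
          · exact h2 ham hbm (by rwa [hu'lt a ham, hu'lt b hbm] at heq)
          · exfalso
            rw [hu'lt a ham, hu'v] at heq
            refine hxB {a} (by simpa using ham) (by simpa using hd) ?_
            refine heq ▸ Submodule.subset_span ⟨a, by simp, rfl⟩
          · exfalso
            rw [hu'v, hu'lt b hbm] at heq
            refine hxB {b} (by simpa using hbm) (by simpa using hd) ?_
            refine heq.symm ▸ Submodule.subset_span ⟨b, by simp, rfl⟩
          · rfl
        · -- independence
          intro t hts htc
          have hsetins : {y : Fin n | (y : ℕ) < m + 1} = insert v {y : Fin n | (y : ℕ) < m} := by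
            ext y
            simp only [Set.mem_setOf_eq, Set.mem_insert_iff]
            constructor
            · intro h
              rcases hcase y h with h | h
              · exact Or.inr h
              · exact Or.inl h
            · rintro (rfl | h)
              · omega
              · omega
          have himg : u' '' {y : Fin n | (y : ℕ) < m + 1}
              = insert (ξ : V) (u '' {y : Fin n | (y : ℕ) < m}) := by
            rw [hsetins, Set.image_insert_eq, hu'v]
            congr 1
            apply Set.image_congr
            intro y hy
            exact hu'lt y hy
          rw [himg] at hts
          have hvertex : ∀ t' : Finset V, ↑t' ⊆ u '' {y : Fin n | (y : ℕ) < m} →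
              ∃ T : Finset (Fin n), (∀ y ∈ T, (y : ℕ) < m) ∧ u '' ↑T = ↑t' ∧ T.card = t'.card := by
            intro t' ht'
            set T : Finset (Fin n) := Finset.univ.filter (fun y => (y : ℕ) < m ∧ u y ∈ t') with hT
            have hTm : ∀ y ∈ T, (y : ℕ) < m := fun y hy => (Finset.mem_filter.1 hy).2.1
            have hset : u '' ↑T = ↑t' := by
              apply Set.Subset.antisymm
              · rintro z ⟨y, hy, rfl⟩
                exact (Finset.mem_filter.1 hy).2.2
              · intro z hz
                obtain ⟨y, hym, rfl⟩ := ht' hz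
                exact ⟨y, Finset.mem_filter.2 ⟨Finset.mem_univ y, hym, hz⟩, rfl⟩
            have himgT : T.image u = t' := Finset.coe_injective (by rw [Finset.coe_image]; exact hset)
            refine ⟨T, hTm, hset, ?_⟩
            rw [← himgT, Finset.card_image_of_injOn]
            intro a haT b hbT hab
            exact h2 (hTm a haT) (hTm b hbT) hab
          by_cases hxt : (ξ : V) ∈ t
          · set t' : Finset V := t.erase (ξ : V) with ht'
            have hins : (t : Set V) = insert (ξ : V) ↑t' := by
              rw [ht', Finset.coe_erase, Set.insert_diff_singleton]
              exact (Set.insert_eq_self.2 hxt).symm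
            have hxnot : (ξ : V) ∉ (t' : Set V) := by simp [ht']
            have ht'sub : (t' : Set V) ⊆ u '' {y : Fin n | (y : ℕ) < m} := by
              intro z hz
              have hz2 : z ∈ (t : Set V) := by
                rw [hins]
                exact Set.mem_insert_of_mem _ hz
              rcases Set.mem_insert_iff.1 (hts hz2) with rfl | h
              · exact absurd hz hxnot
              · exact h
            rw [hins]
            refine (linearIndepOn_id_insert hxnot).2 ⟨?_, ?_⟩
            · exact h3 t' ht'sub (le_trans (Finset.card_erase_le) htc)
            · obtain ⟨T, hTm, hTset, hTcard⟩ := hvertex t' ht'sub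
              have hspan : Submodule.span ℝ (↑t' : Set V) = Submodule.span ℝ (u '' ↑T) := by
                rw [hTset]
              rw [hspan]
              apply hxB T hTm
              rw [hTcard, ht', Finset.card_erase_of_mem hxt]
              omega
          · have htsub' : (t : Set V) ⊆ u '' {y : Fin n | (y : ℕ) < m} := by
              intro z hz
              rcases Set.mem_insert_iff.1 (hts hz) with rfl | h
              · exact absurd hz hxt
              · exact h
            exact h3 t htsub' htc
  obtain ⟨u, h1, -, -⟩ := key n
  refine ⟨Matrix.of (fun j t => u j t), ?_⟩
  intro j k
  have hiff := h1 j k j.isLt k.isLt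
  have hsum : (∑ t, (u j) t * (u k) t) = (inner ℝ (u j) (u k) : ℝ) := by
    rw [PiLp.inner_apply]
    apply Finset.sum_congr rfl
    intro t _
    rw [RCLike.inner_apply, conj_trivial]
    ring
  show (∑ t, (u j) t * (u k) t = 0) ↔ H.Adj j k
  rw [hsum]
  exact hiff

-- encoding / decoding machinery (appended to part1)

/-- Graphs admitting a valid orthogonality representation. -/
def GoodG (n dmax : ℕ) (H : SimpleGraph (Fin n)) : Prop :=
  ∃ M, ValidRep n dmax H M

noncomputable def mrep (n dmax : ℕ) (H : SimpleGraph (Fin n)) :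
    Matrix (Fin n) (Fin (2 * dmax)) ℝ :=
  if h : GoodG n dmax H then h.choose else 0

lemma mrep_valid {n dmax : ℕ} {H : SimpleGraph (Fin n)} (h : GoodG n dmax H) :
    ValidRep n dmax H (mrep n dmax H) := by
  rw [mrep, dif_pos h]
  exact h.choose_spec

noncomputable def codeD (n : ℕ) (D : Fin n → ℕ) : ℝ :=
  ((Encodable.encode (List.ofFn D) + 1 : ℕ) : ℝ)

lemma codeD_pos (n : ℕ) (D : Fin n → ℕ) : 0 < codeD n D := by
  rw [codeD]
  exact_mod_cast Nat.succ_pos _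

lemma codeD_inj {n : ℕ} {D D' : Fin n → ℕ} (h : codeD n D = codeD n D') : D = D' := by
  rw [codeD, codeD] at h
  have h2' : Encodable.encode (List.ofFn D) + 1 = Encodable.encode (List.ofFn D') + 1 := by
    exact_mod_cast h
  have h2 : Encodable.encode (List.ofFn D) = Encodable.encode (List.ofFn D') := by omega
  exact List.ofFn_injective (Encodable.encode_injective h2)

noncomputable def Phi (n dmax : ℕ) (D : Fin n → ℕ) (H : SimpleGraph (Fin n)) :
    Matrix (Fin n) (Fin (2 * dmax)) ℝ :=
  Matrix.of fun p t => (if (p : ℕ) = 0 then codeD n D else 1) * mrep n dmax H p t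

lemma Phi_gram {n dmax : ℕ} (D : Fin n → ℕ) {H : SimpleGraph (Fin n)}
    (hg : GoodG n dmax H) (j k : Fin n) :
    ((∑ t, Phi n dmax D H j t * Phi n dmax D H k t) = 0 ↔ H.Adj j k) := by
  have hv := mrep_valid hg
  have hcne : ∀ p : Fin n, (if (p : ℕ) = 0 then codeD n D else 1) ≠ 0 := by
    intro p
    split_ifs
    · exact ne_of_gt (codeD_pos n D)
    · exact one_ne_zero
  have hsum : (∑ t, Phi n dmax D H j t * Phi n dmax D H k t)
      = (if (j : ℕ) = 0 then codeD n D else 1) * (if (k : ℕ) = 0 then codeD n D else 1)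
        * ∑ t, mrep n dmax H j t * mrep n dmax H k t := by
    rw [Finset.mul_sum]
    apply Finset.sum_congr rfl
    intro t _
    show ((if (j : ℕ) = 0 then codeD n D else 1) * mrep n dmax H j t)
      * ((if (k : ℕ) = 0 then codeD n D else 1) * mrep n dmax H k t) = _
    ring
  rw [hsum]
  rw [mul_eq_zero, mul_eq_zero]
  simp only [hcne j, hcne k, false_or]
  exact hv j k

lemma mrep_row_ne_zero {n dmax : ℕ} {H : SimpleGraph (Fin n)} (hg : GoodG n dmax H)
    (p : Fin n) : ∃ t, mrep n dmax H p t ≠ 0 := by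
  by_contra h
  push_neg at h
  have : (∑ t, mrep n dmax H p t * mrep n dmax H p t) = 0 := by
    apply Finset.sum_eq_zero
    intro t _
    rw [h t, mul_zero]
  exact H.irrefl ((mrep_valid hg p p).1 this)

lemma Phi_inj {n dmax : ℕ} (hn : 1 ≤ n) {D D' : Fin n → ℕ}
    {H H' : SimpleGraph (Fin n)} (hg : GoodG n dmax H) (hg' : GoodG n dmax H')
    (heq : Phi n dmax D H = Phi n dmax D' H') : D = D' ∧ H = H' := by
  have hHH : H = H' := by
    ext j k
    rw [← Phi_gram D hg j k, heq, Phi_gram D' hg' j k]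
  subst hHH
  refine ⟨?_, rfl⟩
  set p0 : Fin n := ⟨0, hn⟩ with hp0
  obtain ⟨t0, ht0⟩ := mrep_row_ne_zero hg p0
  have := congrFun (congrFun heq p0) t0
  simp only [Phi, Matrix.of_apply, if_true] at this
  exact codeD_inj (mul_right_cancel₀ ht0 this)

noncomputable def decPair (n dmax : ℕ) (M : Matrix (Fin n) (Fin (2 * dmax)) ℝ) :
    (Fin n → ℕ) × SimpleGraph (Fin n) :=
  if h : ∃ pr : (Fin n → ℕ) × SimpleGraph (Fin n),
      GoodG n dmax pr.2 ∧ Phi n dmax pr.1 pr.2 = M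
  then h.choose else (fun _ => 0, ⊥)

lemma decPair_Phi {n dmax : ℕ} (hn : 1 ≤ n) (D : Fin n → ℕ)
    {H : SimpleGraph (Fin n)} (hg : GoodG n dmax H) :
    decPair n dmax (Phi n dmax D H) = (D, H) := by
  have hex : ∃ pr : (Fin n → ℕ) × SimpleGraph (Fin n),
      GoodG n dmax pr.2 ∧ Phi n dmax pr.1 pr.2 = Phi n dmax D H := ⟨(D, H), hg, rfl⟩
  rw [decPair, dif_pos hex]
  obtain ⟨hg', heq⟩ := hex.choose_spec
  obtain ⟨h1, h2⟩ := Phi_inj hn hg' hg heq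
  exact Prod.ext h1 h2

-- layer functions

noncomputable def dec0 (n : ℕ) (i0 : Fin n) (M : Matrix (Fin n) (Fin 1) ℝ) : Fin n :=
  if h : ∃ p, M p 0 ≠ 0 then h.choose else i0

lemma dec0_eq (n : ℕ) (i0 : Fin n) (M : Matrix (Fin n) (Fin 1) ℝ) (j : Fin n)
    (hj : M j 0 ≠ 0) (huniq : ∀ p, M p 0 ≠ 0 → p = j) : dec0 n i0 M = j := by
  have hex : ∃ p, M p 0 ≠ 0 := ⟨j, hj⟩
  rw [dec0, dif_pos hex]
  exact huniq _ hex.choose_spec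

def oneGraph (n : ℕ) (i : Fin n) (Ns : Multiset (Fin n)) : SimpleGraph (Fin n) where
  Adj p q := p ≠ q ∧ ((p = i ∧ q ∈ Ns) ∨ (q = i ∧ p ∈ Ns))
  symm := ⟨by
    intro p q h
    exact ⟨h.1.symm, h.2.symm⟩⟩
  loopless := ⟨fun p h => h.1 rfl⟩

noncomputable def layer0 (n dmax : ℕ) (i0 : Fin n) (M : Matrix (Fin n) (Fin 1) ℝ)
    (Sm : Multiset (Matrix (Fin n) (Fin 1) ℝ)) : Matrix (Fin n) (Fin (2 * dmax)) ℝ :=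
  Phi n dmax
    (fun p => if p = dec0 n i0 M then 0 else if p ∈ Sm.map (dec0 n i0) then 1 else 2)
    (oneGraph n (dec0 n i0 M) (Sm.map (dec0 n i0)))

def lmin (L : List ℕ) (b : ℕ) : ℕ := L.foldr min b

lemma lmin_le_init (L : List ℕ) (b : ℕ) : lmin L b ≤ b := by
  induction L with
  | nil => exact le_refl b
  | cons a L ih => exact le_trans (min_le_right _ _) ih

lemma lmin_le_mem {L : List ℕ} {a : ℕ} (h : a ∈ L) (b : ℕ) : lmin L b ≤ a := by
  induction L with
  | nil => cases h
  | cons a' L ih =>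
    rcases List.mem_cons.1 h with rfl | h
    · exact min_le_left _ _
    · exact le_trans (min_le_right _ _) (ih h)

lemma le_lmin {L : List ℕ} {b c : ℕ} (hb : c ≤ b) (h : ∀ a ∈ L, c ≤ a) : c ≤ lmin L b := by
  induction L with
  | nil => exact hb
  | cons a' L ih =>
    exact le_min (h a' List.mem_cons_self) (ih (fun a ha => h a (List.mem_cons_of_mem _ ha)))

noncomputable def mmin (s : Multiset ℕ) (b : ℕ) : ℕ := lmin s.toList b

lemma mmin_le_init (s : Multiset ℕ) (b : ℕ) : mmin s b ≤ b := lmin_le_init _ _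

lemma mmin_le_mem {s : Multiset ℕ} {a : ℕ} (h : a ∈ s) (b : ℕ) : mmin s b ≤ a :=
  lmin_le_mem (Multiset.mem_toList.2 h) b

lemma le_mmin {s : Multiset ℕ} {b c : ℕ} (hb : c ≤ b) (h : ∀ a ∈ s, c ≤ a) : c ≤ mmin s b :=
  le_lmin hb (fun a ha => h a (Multiset.mem_toList.1 ha))

def stepGraph (n : ℕ) (l : ℕ) (D' : Fin n → ℕ)
    (ps : Multiset ((Fin n → ℕ) × SimpleGraph (Fin n))) : SimpleGraph (Fin n) where
  Adj p q := p ≠ q ∧ D' p ≤ l + 1 ∧ D' q ≤ l + 1 ∧ D' p + D' q < 2 * (l + 1) ∧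
    ∃ pr ∈ ps, pr.2.Adj p q
  symm := ⟨by
    rintro p q ⟨h1, h2, h3, h4, pr, hpr, hadj⟩
    exact ⟨h1.symm, h3, h2, by omega, pr, hpr, hadj.symm⟩⟩
  loopless := ⟨fun p h => h.1 rfl⟩

noncomputable def layerS (n dmax : ℕ) (l : ℕ) (M : Matrix (Fin n) (Fin (2 * dmax)) ℝ)
    (Sm : Multiset (Matrix (Fin n) (Fin (2 * dmax)) ℝ)) :
    Matrix (Fin n) (Fin (2 * dmax)) ℝ :=
  let D := (decPair n dmax M).1
  let ps := Sm.map (decPair n dmax)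
  let D' : Fin n → ℕ := fun p =>
    if D p = 0 then 0 else min (l + 2) (mmin (ps.map (fun pr => 1 + pr.1 p)) (l + 2))
  Phi n dmax D' (stepGraph n l D' ps)


/-- key lemma in the proof of Theorem 2. There is a sequence of
layers `f l` mapping a local context and the multiset of the neighbors' contexts to a
new `n × 2d_max` context such that, on every connected graph of maximum degree at most
`d_max`, running them from the one-hot initialization yields contexts whose rows encode
the receptive field by orthogonality:
`⟨U_i^{(l)}[j,:], U_i^{(l)}[k,:]⟩ = 0 ↔ (v_j, v_k) ∈ E_i^{(l)}`. -/
theorem receptive_field_orthogonality_encoding (n dmax : ℕ) (hn : 1 ≤ n)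
    (hd : 1 ≤ dmax) :
    ∃ f : (l : ℕ) → Matrix (Fin n) (Fin (width dmax l)) ℝ →
        Multiset (Matrix (Fin n) (Fin (width dmax l)) ℝ) →
        Matrix (Fin n) (Fin (width dmax (l + 1))) ℝ,
      ∀ (G : SimpleGraph (Fin n)), G.Connected → (∀ v, G.degree v ≤ dmax) →
        ∀ U : (l : ℕ) → Fin n → Matrix (Fin n) (Fin (width dmax l)) ℝ,
          (∀ i, U 0 i = Matrix.of fun p _ => if p = i then (1 : ℝ) else 0) →
          (∀ l i, U (l + 1) i =
            f l (U l i) ((G.neighborFinset i).val.map (fun j => U l j))) →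
          ∀ l, 1 ≤ l → ∀ i j k : Fin n,
            ((∑ t, U l i j t * U l i k t) = 0 ↔ (recepGraph G i l).Adj j k) := by
  refine ⟨fun l => match l with
    | 0 => layer0 n dmax ⟨0, hn⟩
    | (k + 1) => layerS n dmax (k + 1), ?_⟩
  intro G hconn hdeg U hU0 hUrec
  have hgood : ∀ (i : Fin n) (l : ℕ), GoodG n dmax (recepGraph G i l) := by
    intro i l
    apply exists_validRep n dmax hd
    intro v s hs
    have hsub : s ⊆ G.neighborFinset v := by
      intro w hw
      rw [SimpleGraph.mem_neighborFinset]
      exact And.left (hs w hw)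
    exact le_trans (Finset.card_le_card hsub) (hdeg v)
  have hdist0 : ∀ i p : Fin n, G.dist i p = 0 ↔ i = p := fun i p =>
    hconn.dist_eq_zero_iff
  have hadj_dist : ∀ i j : Fin n, G.Adj i j → G.dist i j = 1 := fun i j h =>
    SimpleGraph.dist_eq_one_iff_adj.2 h
  have htri : ∀ i j p : Fin n, G.Adj i j → G.dist i p ≤ 1 + G.dist j p := by
    intro i j p hij
    calc G.dist i p ≤ G.dist i j + G.dist j p := hconn.dist_triangle
    _ = 1 + G.dist j p := by rw [hadj_dist i j hij]
  have hpred : ∀ i p : Fin n, i ≠ p →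
      ∃ j : Fin n, G.Adj i j ∧ G.dist j p + 1 = G.dist i p := by
    intro i p hne
    obtain ⟨w, hw⟩ := (hconn.preconnected i p).exists_walk_length_eq_dist
    cases w with
    | nil => exact absurd rfl hne
    | @cons _ j _ h q =>
      refine ⟨j, h, ?_⟩
      have hq : G.dist j p ≤ q.length := SimpleGraph.dist_le q
      have ht := htri i j p h
      rw [SimpleGraph.Walk.length_cons] at hw
      omega
  have key : ∀ l (i : Fin n), U (l + 1) i
      = Phi n dmax (fun p => min (G.dist i p) (l + 2)) (recepGraph G i (l + 1)) := by
    intro l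
    induction l with
    | zero =>
      intro i
      rw [hUrec 0 i]
      show layer0 n dmax ⟨0, hn⟩ (U 0 i)
        ((G.neighborFinset i).val.map (fun j => U 0 j)) = _
      have hdec0 : ∀ j : Fin n, dec0 n ⟨0, hn⟩ (U 0 j) = j := by
        intro j
        apply dec0_eq n ⟨0, hn⟩ (U 0 j) j
        · rw [hU0 j]
          show ¬ ((if j = j then (1:ℝ) else 0) = 0)
          simp
        · intro p hp
          rw [hU0 j] at hp
          by_contra hne
          change (if p = j then (1:ℝ) else 0) ≠ 0 at hp
          rw [if_neg hne] at hp
          exact hp rfl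
      have hNs : (((G.neighborFinset i).val.map (fun j => U 0 j)).map (dec0 n ⟨0, hn⟩))
          = (G.neighborFinset i).val := by
        refine (Multiset.map_map _ _ _).trans ?_
        have hcomp : ((dec0 n ⟨0, hn⟩) ∘ fun j => U 0 j) = id := by
          funext j
          exact hdec0 j
        rw [hcomp, Multiset.map_id]
      have hmemN : ∀ p, (p ∈ (G.neighborFinset i).val) ↔ G.Adj i p := by
        intro p
        rw [Finset.mem_val, SimpleGraph.mem_neighborFinset]
      simp only [layer0]
      rw [hdec0 i]
      erw [hNs]
      have hD : (fun p => if p = i then 0 else if p ∈ (G.neighborFinset i).val then 1 else 2)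
          = fun p => min (G.dist i p) (0 + 2) := by
        funext p
        by_cases hpi : p = i
        · subst hpi
          rw [if_pos rfl]
          have : G.dist p p = 0 := SimpleGraph.dist_self
          omega
        · rw [if_neg hpi]
          by_cases hadj : G.Adj i p
          · rw [if_pos ((hmemN p).2 hadj)]
            have := hadj_dist i p hadj
            omega
          · rw [if_neg (fun hm => hadj ((hmemN p).1 hm))]
            have h0 : G.dist i p ≠ 0 := fun h => hpi ((hdist0 i p).1 h).symm
            have h1 : G.dist i p ≠ 1 := fun h => hadj (SimpleGraph.dist_eq_one_iff_adj.1 h)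
            omega
      have hH : oneGraph n i (G.neighborFinset i).val = recepGraph G i (0 + 1) := by
        ext p q
        show (p ≠ q ∧ ((p = i ∧ q ∈ (G.neighborFinset i).val) ∨
            (q = i ∧ p ∈ (G.neighborFinset i).val))) ↔
          (G.Adj p q ∧ G.dist i p ≤ 0 + 1 ∧ G.dist i q ≤ 0 + 1 ∧
            G.dist i p + G.dist i q < 2 * (0 + 1))
        constructor
        · rintro ⟨hne, ⟨rfl, hq⟩ | ⟨rfl, hp⟩⟩
          · have hadj : G.Adj p q := (hmemN q).1 hq
            have h1 : G.dist p p = 0 := SimpleGraph.dist_self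
            have h2 := hadj_dist p q hadj
            exact ⟨hadj, by omega, by omega, by omega⟩
          · have hadj : G.Adj q p := (hmemN p).1 hp
            have h1 : G.dist q q = 0 := SimpleGraph.dist_self
            have h2 := hadj_dist q p hadj
            exact ⟨hadj.symm, by omega, by omega, by omega⟩
        · rintro ⟨hadj, hp, hq, hsum⟩
          have hcase : G.dist i p = 0 ∨ G.dist i q = 0 := by omega
          rcases hcase with hp0 | hq0
          · have : i = p := (hdist0 i p).1 hp0
            subst this
            exact ⟨G.ne_of_adj hadj, Or.inl ⟨rfl, (hmemN q).2 hadj⟩⟩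
          · have : i = q := (hdist0 i q).1 hq0
            subst this
            exact ⟨G.ne_of_adj hadj, Or.inr ⟨rfl, (hmemN p).2 hadj.symm⟩⟩
      rw [hD, hH]
    | succ k ih =>
      intro i
      rw [hUrec (k + 1) i]
      show layerS n dmax (k + 1) (U (k + 1) i)
        ((G.neighborFinset i).val.map (fun j => U (k + 1) j)) = _
      have hps : (((G.neighborFinset i).val.map (fun j => U (k + 1) j)).map (decPair n dmax))
          = (G.neighborFinset i).val.map
            (fun j => ((fun p => min (G.dist j p) (k + 2)), recepGraph G j (k + 1))) := by
        refine (Multiset.map_map _ _ _).trans ?_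
        apply Multiset.map_congr rfl
        intro j _
        show decPair n dmax (U (k + 1) j) = _
        rw [ih j]
        exact decPair_Phi hn _ (hgood j (k + 1))
      have hmemN : ∀ p, (p ∈ (G.neighborFinset i).val) ↔ G.Adj i p := by
        intro p
        rw [Finset.mem_val, SimpleGraph.mem_neighborFinset]
      simp only [layerS]
      rw [ih i, decPair_Phi hn _ (hgood i (k + 1))]
      erw [hps]
      have hD' : (fun p => if min (G.dist i p) (k + 2) = 0 then 0 else min (k + 1 + 2)
            (mmin (((G.neighborFinset i).val.map
              (fun j => ((fun p => min (G.dist j p) (k + 2)), recepGraph G j (k + 1)))).map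
                (fun pr => 1 + pr.1 p)) (k + 1 + 2)))
          = fun p => min (G.dist i p) (k + 1 + 2) := by
        funext p
        by_cases hpi : i = p
        · subst hpi
          have h0 : G.dist i i = 0 := SimpleGraph.dist_self
          rw [if_pos (by omega)]
          omega
        · have hdne : G.dist i p ≠ 0 := fun h => hpi ((hdist0 i p).1 h)
          rw [if_neg (by omega)]
          have hmemmap : ∀ a, a ∈ (((G.neighborFinset i).val.map
              (fun j => ((fun p => min (G.dist j p) (k + 2)), recepGraph G j (k + 1)))).map
                (fun pr => 1 + pr.1 p)) ↔
              ∃ j, G.Adj i j ∧ a = 1 + min (G.dist j p) (k + 2) := by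
            intro a
            rw [Multiset.map_map]
            constructor
            · intro ha
              obtain ⟨j, hj, heq⟩ := Multiset.mem_map.1 ha
              exact ⟨j, (hmemN j).1 hj, heq.symm⟩
            · rintro ⟨j, hj, rfl⟩
              exact Multiset.mem_map.2 ⟨j, (hmemN j).2 hj, rfl⟩
          apply le_antisymm
          · obtain ⟨j, hadj, hjd⟩ := hpred i p hpi
            have h1 := mmin_le_mem ((hmemmap _).2 ⟨j, hadj, rfl⟩) (k + 1 + 2)
            omega
          · apply le_min (min_le_right _ _)
            apply le_mmin (min_le_right _ _)
            intro a ha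
            obtain ⟨j, hj, rfl⟩ := (hmemmap a).1 ha
            have := htri i j p hj
            omega
      rw [hD']
      have main : ∀ p q : Fin n, G.Adj p q → G.dist i p ≤ k + 2 → G.dist i q ≤ k + 2 →
          G.dist i p + G.dist i q < 2 * (k + 2) → G.dist i p ≤ G.dist i q →
          ∃ j, G.Adj i j ∧ (recepGraph G j (k + 1)).Adj p q := by
        intro p q hpq h1 h2 h3 hle
        by_cases hip : i = p
        · subst hip
          have hq1 : G.dist i q = 1 := hadj_dist i q hpq
          have hqi : G.dist q i = 1 := by rw [SimpleGraph.dist_comm]; exact hq1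
          have hqq : G.dist q q = 0 := SimpleGraph.dist_self
          exact ⟨q, hpq, hpq, by omega, by omega, by omega⟩
        · obtain ⟨j, hij, hjd⟩ := hpred i p hip
          have hjq : G.dist j q ≤ G.dist j p + 1 := by
            have ht := hconn.dist_triangle (u := j) (v := p) (w := q)
            rw [hadj_dist p q hpq] at ht
            exact ht
          exact ⟨j, hij, hpq, by omega, by omega, by omega⟩
      have hG : stepGraph n (k + 1) (fun p => min (G.dist i p) (k + 1 + 2))
          ((G.neighborFinset i).val.map
            (fun j => ((fun p => min (G.dist j p) (k + 2)), recepGraph G j (k + 1))))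
          = recepGraph G i (k + 1 + 1) := by
        ext p q
        show (p ≠ q ∧ min (G.dist i p) (k + 1 + 2) ≤ k + 1 + 1 ∧
            min (G.dist i q) (k + 1 + 2) ≤ k + 1 + 1 ∧
            min (G.dist i p) (k + 1 + 2) + min (G.dist i q) (k + 1 + 2) < 2 * (k + 1 + 1) ∧
            ∃ pr ∈ (G.neighborFinset i).val.map
              (fun j => ((fun p => min (G.dist j p) (k + 2)), recepGraph G j (k + 1))),
                pr.2.Adj p q) ↔
          (G.Adj p q ∧ G.dist i p ≤ k + 1 + 1 ∧ G.dist i q ≤ k + 1 + 1 ∧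
            G.dist i p + G.dist i q < 2 * (k + 1 + 1))
        have hpair : (∃ pr ∈ (G.neighborFinset i).val.map
              (fun j => ((fun p => min (G.dist j p) (k + 2)), recepGraph G j (k + 1))),
                pr.2.Adj p q) ↔
            ∃ j, G.Adj i j ∧ (recepGraph G j (k + 1)).Adj p q := by
          constructor
          · rintro ⟨pr, hpr, hadj⟩
            obtain ⟨j, hj, rfl⟩ := Multiset.mem_map.1 hpr
            exact ⟨j, (hmemN j).1 hj, hadj⟩
          · rintro ⟨j, hj, hadj⟩
            exact ⟨_, Multiset.mem_map.2 ⟨j, (hmemN j).2 hj, rfl⟩, hadj⟩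
        constructor
        · rintro ⟨hne, h1, h2, h3, hex⟩
          obtain ⟨j, hij, hadj⟩ := hpair.1 hex
          exact ⟨hadj.1, by omega, by omega, by omega⟩
        · rintro ⟨hGadj, h1, h2, h3⟩
          refine ⟨G.ne_of_adj hGadj, by omega, by omega, by omega, ?_⟩
          rcases le_total (G.dist i p) (G.dist i q) with hle | hle
          · exact hpair.2 (main p q hGadj (by omega) (by omega) (by omega) hle)
          · obtain ⟨j, hj, hadj⟩ := main q p hGadj.symm (by omega) (by omega) (by omega) hle
            exact hpair.2 ⟨j, hj, hadj.symm⟩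
      rw [hG]
  intro l hl i j k
  obtain ⟨k', rfl⟩ : ∃ k', l = k' + 1 := ⟨l - 1, by omega⟩
  rw [key k' i]
  exact Phi_gram _ (hgood i (k' + 1)) j k
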